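/- In an abelian category, with notation as in the previous square (monomorphisms θ: A' → A'', φ: B' → B'', morphisms f,g with gθ = φf, and induced morphism h on cokernels), there is a short exact sequence 0 → A' → Ker(h∘p_θ) → Ker h → 0. -/

import Mathlib

/-!
STATEMENT 5: With a commutative square `θ ≫ g = f ≫ φ` in an abelian category where
`θ, φ` are monomorphisms and `h : Coker θ ⟶ Coker φ` is the induced map on cokernels,
there is a short exact sequence `0 → A' → Ker(h ∘ p_θ) → Ker h → 0`, where the first
map is induced by `θ` and the second by `p_θ`.
-/

open CategoryTheory CategoryTheory.Limits

noncomputable section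

universe v u

variable {C : Type u} [Category.{v} C] [Abelian C]

/-- The morphism induced on cokernels by a commutative square. -/
def inducedCokerMap {A' A'' B' B'' : C} (θ : A' ⟶ A'') (φ : B' ⟶ B'')
    (f : A' ⟶ B') (g : A'' ⟶ B'') (w : θ ≫ g = f ≫ φ) :
    cokernel θ ⟶ cokernel φ :=
  cokernel.desc θ (g ≫ cokernel.π φ) (by
    rw [← Category.assoc, w, Category.assoc, cokernel.condition, comp_zero])

open Abelian.Pseudoelement in
theorem kses_aux {A' A'' D : C} (θ : A' ⟶ A'') (hθ : Mono θ) (h : cokernel θ ⟶ D)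
    (i : A' ⟶ kernel (cokernel.π θ ≫ h)) (q : kernel (cokernel.π θ ≫ h) ⟶ kernel h)
    (hi : i ≫ kernel.ι (cokernel.π θ ≫ h) = θ)
    (hq : q ≫ kernel.ι h = kernel.ι (cokernel.π θ ≫ h) ≫ cokernel.π θ) :
    ∃ wiq : i ≫ q = 0,
      Mono i ∧ Epi q ∧ (ShortComplex.mk i q wiq).Exact := by
  haveI := hθ
  have hexθ : (ShortComplex.mk θ (cokernel.π θ) (cokernel.condition θ)).Exact :=
    ShortComplex.exact_of_f_is_kernel _
      (Abelian.monoIsKernelOfCokernel _ (colimit.isColimit _))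
  have wiq : i ≫ q = 0 := by
    rw [← cancel_mono (kernel.ι h)]
    rw [Category.assoc, hq, ← Category.assoc, hi, cokernel.condition, zero_comp]
  refine ⟨wiq, mono_of_mono_fac hi, ?_, ?_⟩
  · -- Epi q
    apply epi_of_pseudo_surjective
    intro b
    obtain ⟨a, ha⟩ := pseudo_surjective_of_epi (cokernel.π θ) (pseudoApply (kernel.ι h) b)
    have h0 : pseudoApply (cokernel.π θ ≫ h) a = 0 := by
      rw [Abelian.Pseudoelement.comp_apply, ha, ← Abelian.Pseudoelement.comp_apply, kernel.condition, Abelian.Pseudoelement.zero_apply]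
    obtain ⟨c, hc⟩ := pseudo_exact_of_exact (ShortComplex.exact_kernel (cokernel.π θ ≫ h)) a h0
    refine ⟨c, pseudo_injective_of_mono (kernel.ι h) ?_⟩
    rw [← Abelian.Pseudoelement.comp_apply, hq, Abelian.Pseudoelement.comp_apply, hc, ha]
  · -- Exactness
    apply exact_of_pseudo_exact
    intro x hx
    have h0 : pseudoApply (cokernel.π θ) (pseudoApply (kernel.ι (cokernel.π θ ≫ h)) x) = 0 := by
      have : pseudoApply (kernel.ι h) (pseudoApply q x) = 0 := by
        rw [hx, apply_zero]
      rwa [← Abelian.Pseudoelement.comp_apply, hq, Abelian.Pseudoelement.comp_apply] at this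
    obtain ⟨a', ha'⟩ := pseudo_exact_of_exact hexθ _ h0
    refine ⟨a', pseudo_injective_of_mono (kernel.ι (cokernel.π θ ≫ h)) ?_⟩
    rw [← Abelian.Pseudoelement.comp_apply, hi]
    exact ha'

theorem kernel_short_exact_sequence
    {A' A'' B' B'' : C} (θ : A' ⟶ A'') (φ : B' ⟶ B'')
    (f : A' ⟶ B') (g : A'' ⟶ B'') (hθ : Mono θ) (hφ : Mono φ)
    (w : θ ≫ g = f ≫ φ) :
    letI h := inducedCokerMap θ φ f g w
    letI i : A' ⟶ kernel (cokernel.π θ ≫ h) :=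
      kernel.lift _ θ (by rw [← Category.assoc, cokernel.condition, zero_comp])
    letI q : kernel (cokernel.π θ ≫ h) ⟶ kernel h :=
      kernel.lift _ (kernel.ι (cokernel.π θ ≫ h) ≫ cokernel.π θ)
        (by rw [Category.assoc, kernel.condition])
    ∃ wiq : i ≫ q = 0,
      Mono i ∧ Epi q ∧ (ShortComplex.mk i q wiq).Exact := by
  exact kses_aux θ hθ (inducedCokerMap θ φ f g w) _ _
    (kernel.lift_ι _ _ _) (kernel.lift_ι _ _ _)

end
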